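/- (Completeness of Δ-edge anchored clique enumeration) Let R_i be a rule stratum, t ≥ 0, and r ∈ R_i a rule whose arity is at least 2 and all of whose body literals have arity at most 2. For every ground rule r̄ ∈ gr({r}, J_i^t) with B(r̄) ∩ Δ_i^t ≠ ∅, the corresponding k-clique C(r̄) is a clique of G(r, J_i^t) containing at least one edge of ΔE_{i,r}^t; consequently, an enumeration procedure that, for each edge e ∈ ΔE_{i,r}^t, enumerates all k-cliques of G(r, J_i^t) containing e, generates the clique C(r̄). -/

import Mathlib

namespace Planning

/-- A term is either a variable or an object (constant). -/
inductive Term (V O : Type) : Type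
  | var : V → Term V O
  | obj : O → Term V O
  deriving DecidableEq

/-- An atom is a predicate symbol applied to a list of terms. -/
structure Atom (P V O : Type) : Type where
  pred : P
  args : List (Term V O)

variable {P V O : Type}

def Term.isObj : Term V O → Prop
  | .var _ => False
  | .obj _ => True

/-- A ground atom mentions no variables. -/
def Atom.isGround (a : Atom P V O) : Prop := ∀ t ∈ a.args, t.isObj

/-- The (finite) set of variables occurring in an atom; its card is the arity of the literal. -/
def Atom.vars [DecidableEq V] (a : Atom P V O) : Finset V :=
  (a.args.filterMap fun t => match t with
    | Term.var v => some v
    | Term.obj _ => none).toFinset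

/-- Two terms match iff one of them is a variable, or they are equal objects. -/
def Term.Matches : Term V O → Term V O → Prop
  | .var _, _ => True
  | _, .var _ => True
  | .obj o, .obj o' => o = o'

/-- `P(x_1,...,x_n)` matches `P'(x'_1,...,x'_n)` iff `P = P'` and each pair of
corresponding terms matches. -/
def Atom.Matches (a b : Atom P V O) : Prop :=
  a.pred = b.pred ∧ List.Forall₂ Term.Matches a.args b.args

/-- Apply a partial substitution to a term. -/
def Term.subst (σ : V → Option O) : Term V O → Term V O
  | .var v => match σ v with
    | some o => .obj o
    | none => .var v
  | .obj o => .obj o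

/-- Apply a partial substitution to an atom. -/
def Atom.subst (σ : V → Option O) (a : Atom P V O) : Atom P V O :=
  ⟨a.pred, a.args.map (Term.subst σ)⟩

/-- Apply a total substitution `ρ`, yielding the ground atom `a[ρ]`. -/
def Atom.ground (ρ : V → O) (a : Atom P V O) : Atom P V O :=
  a.subst (fun v => some (ρ v))

/-- The partial substitution `[v, v']` induced by two vertices `v = x/o`, `v' = x'/o'`. -/
def pairSub [DecidableEq V] (v v' : V × O) : V → Option O :=
  fun x => if x = v.1 then some v.2 else if x = v'.1 then some v'.2 else none

/-- The partial substitution `[v]` induced by a single vertex `v = x/o`. -/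
def singleSub [DecidableEq V] (v : V × O) : V → Option O :=
  fun x => if x = v.1 then some v.2 else none

/-- An action schema (also used for the body of a Datalog rule): a finite set of
variables `X(a)`, positive precondition atoms and negative precondition atoms. -/
structure Schema (P V O : Type) : Type where
  vars : Finset V
  prePos : Set (Atom P V O)
  preNeg : Set (Atom P V O)

/-- The arity of a schema is `|X(a)|`. -/
def Schema.arity (a : Schema P V O) : ℕ := a.vars.card

/-- `x/o` is a vertex-consistent substitution: the single-vertex analogue of the
edge removal criteria. -/
def consistentVertex [DecidableEq V] (a : Schema P V O) (s : Set (Atom P V O))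
    (v : V × O) : Prop :=
  v.1 ∈ a.vars ∧
  (∀ p ∈ a.prePos, ∃ q ∈ s, (p.subst (singleSub v)).Matches q) ∧
  (∀ p ∈ a.preNeg, p.subst (singleSub v) ∉ s)

/-- `{v, v'}` is an edge of the substitution consistency graph `G_{a,s}`:
the pair is excluded neither by `I^≠` (two objects for one variable), nor by `I^+`
(some positive precondition atom, after applying `[v,v']`, matches no ground atom
of `s`), nor by `I^-` (some negative precondition atom, after applying `[v,v']`,
yields a ground atom contained in `s`). -/
def consistentEdge [DecidableEq V] (a : Schema P V O) (s : Set (Atom P V O))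
    (v v' : V × O) : Prop :=
  v.1 ∈ a.vars ∧ v'.1 ∈ a.vars ∧
  (v.1 = v'.1 → v.2 = v'.2) ∧
  (∀ p ∈ a.prePos, ∃ q ∈ s, (p.subst (pairSub v v')).Matches q) ∧
  (∀ p ∈ a.preNeg, p.subst (pairSub v v') ∉ s)

/-- The vertex set `{x/ρ(x) | x ∈ X(a)}` (exactly one vertex per variable of `a`)
is a `k`-clique of the substitution consistency graph `G_{a,s}`. -/
def IsCliqueOf [DecidableEq V] (a : Schema P V O) (s : Set (Atom P V O))
    (ρ : V → O) : Prop :=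
  ∀ x ∈ a.vars, ∀ x' ∈ a.vars, x ≠ x' → consistentEdge a s (x, ρ x) (x', ρ x')

/-- All ground precondition (resp. body) literals obtained by applying `ρ` hold in `s`:
positive ground atoms are in `s`, negative ground atoms are not in `s`. -/
def Applicable (a : Schema P V O) (s : Set (Atom P V O)) (ρ : V → O) : Prop :=
  (∀ p ∈ a.prePos, p.ground ρ ∈ s) ∧ (∀ p ∈ a.preNeg, p.ground ρ ∉ s)

/-- A Datalog rule: a head atom and a body (a set of positive and negative literals
over the rule's variables). -/
structure Rule (P V O : Type) : Type where
  head : Atom P V O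
  body : Schema P V O

end Planning


set_option linter.unusedSectionVars false
section Aux
open Planning
variable {P V O : Type} [DecidableEq V]

lemma term_subst_matches (σ : V → Option O) (ρ : V → O)
    (hag : ∀ v o, σ v = some o → o = ρ v) (t : Term V O) :
    (t.subst σ).Matches (t.subst fun v => some (ρ v)) := by
  cases t with
  | var v =>
    cases h : σ v with
    | none => simp [Term.subst, h, Term.Matches]
    | some o => simp [Term.subst, h, Term.Matches, hag v o h]
  | obj o => simp [Term.subst, Term.Matches]

lemma atom_subst_matches (σ : V → Option O) (ρ : V → O)
    (hag : ∀ v o, σ v = some o → o = ρ v) (p : Atom P V O) :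
    (p.subst σ).Matches (p.ground ρ) := by
  refine ⟨rfl, ?_⟩
  simp only [Atom.subst, Atom.ground]
  rw [List.forall₂_map_right_iff, List.forall₂_map_left_iff]
  exact List.forall₂_same.mpr fun t _ => term_subst_matches σ ρ hag t

lemma ground_isGround (ρ : V → O) (p : Atom P V O) : (p.ground ρ).isGround := by
  intro t ht
  simp only [Atom.ground, Atom.subst, List.mem_map] at ht
  obtain ⟨u, _, rfl⟩ := ht
  cases u <;> simp [Term.subst, Term.isObj]

lemma mem_vars_of_var_mem {p : Atom P V O} {v : V} (h : Term.var v ∈ p.args) :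
    v ∈ p.vars := by
  simp only [Atom.vars, List.mem_toFinset, List.mem_filterMap]
  exact ⟨Term.var v, h, rfl⟩

lemma subst_eq_ground {p : Atom P V O} (σ : V → Option O) (ρ : V → O)
    (hag : ∀ v o, σ v = some o → o = ρ v)
    (hdom : ∀ v ∈ p.vars, σ v ≠ none) :
    p.subst σ = p.ground ρ := by
  simp only [Atom.subst, Atom.ground]
  congr 1
  refine List.map_congr_left fun t ht => ?_
  cases t with
  | var v =>
    have hv := hdom v (mem_vars_of_var_mem ht)
    cases h : σ v with
    | none => exact absurd h hv
    | some o => simp [Term.subst, h, hag v o h]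
  | obj o => rfl

lemma ground_of_isGround_subst {p : Atom P V O} (σ : V → Option O) (ρ : V → O)
    (hag : ∀ v o, σ v = some o → o = ρ v)
    (hg : (p.subst σ).isGround) :
    p.subst σ = p.ground ρ := by
  refine subst_eq_ground σ ρ hag fun v hv => ?_
  simp only [Atom.vars, List.mem_toFinset, List.mem_filterMap] at hv
  obtain ⟨t, ht, hft⟩ := hv
  cases t with
  | obj o => simp at hft
  | var w =>
    simp only [Option.some.injEq] at hft
    subst hft
    intro hnone
    have := hg (Term.subst σ (Term.var w)) (by
      simp only [Atom.subst, List.mem_map]; exact ⟨Term.var w, ht, rfl⟩)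
    simp [Term.subst, hnone, Term.isObj] at this

lemma ground_args_eq : ∀ {l1 l2 : List (Term V O)},
    List.Forall₂ Term.Matches l1 l2 →
    (∀ t ∈ l1, t.isObj) → (∀ t ∈ l2, t.isObj) → l1 = l2 := by
  intro l1 l2 h
  induction h with
  | nil => intro _ _; rfl
  | cons hm hrest ih =>
    rename_i t u l1 l2
    intro ha hb
    have ht := ha t (by simp)
    have hu := hb u (by simp)
    cases t with
    | var v => simp [Term.isObj] at ht
    | obj o =>
      cases u with
      | var w => simp [Term.isObj] at hu
      | obj o' =>
        have : o = o' := hm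
        subst this
        rw [ih (fun t h => ha t (List.mem_cons_of_mem _ h))
            (fun t h => hb t (List.mem_cons_of_mem _ h))]

lemma ground_matches_eq {a b : Atom P V O} (ha : a.isGround) (hb : b.isGround)
    (h : a.Matches b) : a = b := by
  obtain ⟨hp, hargs⟩ := h
  cases a with
  | mk pa la =>
  cases b with
  | mk pb lb =>
  simp only at hp
  subst hp
  simp only [Atom.mk.injEq, true_and]
  exact ground_args_eq hargs ha hb

lemma pairSub_agrees (ρ : V → O) (x x' : V) :
    ∀ v o, pairSub (x, ρ x) (x', ρ x') v = some o → o = ρ v := by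
  intro v o h
  simp only [pairSub] at h
  split at h
  · next heq => cases h; subst heq; rfl
  · split at h
    · next heq => cases h; subst heq; rfl
    · cases h

end Aux

open Planning in
/-- Completeness of Δ-edge anchored clique enumeration.
Let `Jold = J_i^{t-1} ⊆ Jnew = J_i^t` be the fact sets of two consecutive
semi-naive iterations (so `Δ_i^t = Jnew \ Jold`), and let `r` be a rule of arity
at least `2` all of whose body literals have arity at most `2`. For every ground
rule `r̄ ∈ gr({r}, J_i^t)` (induced by `ρ`) with `B(r̄) ∩ Δ_i^t ≠ ∅`, the
corresponding `k`-clique `C(r̄) = {x/ρ(x) | x ∈ X(r)}` is a clique of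
`G(r, J_i^t)` containing at least one edge of `ΔE_{i,r}^t`; consequently an
enumeration procedure that, for each Δ-edge, enumerates all `k`-cliques of
`G(r, J_i^t)` containing it, generates the clique `C(r̄)` (seeded at that edge). -/
theorem completeness_of_delta_edge_anchored_enumeration
    {P V O : Type} [DecidableEq V]
    (r : Rule P V O) (Jold Jnew : Set (Atom P V O))
    (hsub : Jold ⊆ Jnew)
    (hground : ∀ q ∈ Jnew, q.isGround)
    (hbodyvars : ∀ p ∈ r.body.prePos ∪ r.body.preNeg, p.vars ⊆ r.body.vars)
    (hk : 2 ≤ r.body.arity)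
    (harity : ∀ p ∈ r.body.prePos ∪ r.body.preNeg, p.vars.card ≤ 2)
    (ρ : V → O)
    (happ : Applicable r.body Jnew ρ)
    (hdelta : ∃ p ∈ r.body.prePos, p.ground ρ ∈ Jnew \ Jold) :
    IsCliqueOf r.body Jnew ρ ∧
    ∃ x ∈ r.body.vars, ∃ x' ∈ r.body.vars, x ≠ x' ∧
      consistentEdge r.body Jnew (x, ρ x) (x', ρ x') ∧
      ¬ consistentEdge r.body Jold (x, ρ x) (x', ρ x') := by
  have hedge : ∀ x ∈ r.body.vars, ∀ x' ∈ r.body.vars, x ≠ x' →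
      consistentEdge r.body Jnew (x, ρ x) (x', ρ x') := by
    intro x hx x' hx' hne
    refine ⟨hx, hx', fun h => absurd h hne, ?_, ?_⟩
    · intro p hp
      exact ⟨p.ground ρ, happ.1 p hp,
        atom_subst_matches _ ρ (pairSub_agrees ρ x x') p⟩
    · intro p hp hc
      have hg : (p.subst (pairSub (x, ρ x) (x', ρ x'))).isGround := hground _ hc
      rw [ground_of_isGround_subst _ ρ (pairSub_agrees ρ x x') hg] at hc
      exact happ.2 p hp hc
  refine ⟨fun x hx x' hx' hne => hedge x hx x' hx' hne, ?_⟩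
  obtain ⟨p, hp, hpnew, hpold⟩ := hdelta
  have hpvars : p.vars ⊆ r.body.vars := hbodyvars p (Set.mem_union_left _ hp)
  have hpcard : p.vars.card ≤ 2 := harity p (Set.mem_union_left _ hp)
  obtain ⟨C, hsubC, hCsub, hCcard⟩ :=
    Finset.exists_subsuperset_card_eq hpvars hpcard
      (by have hk' : 2 ≤ r.body.vars.card := hk; omega)
  have hC2 : C.card = 2 := by omega
  obtain ⟨x, x', hne, rfl⟩ := Finset.card_eq_two.mp hC2
  have hx : x ∈ r.body.vars := hCsub (by simp)
  have hx' : x' ∈ r.body.vars := hCsub (by simp)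
  refine ⟨x, hx, x', hx', hne, hedge x hx x' hx' hne, ?_⟩
  intro hold
  have hdom : ∀ v ∈ p.vars, pairSub (x, ρ x) (x', ρ x') v ≠ none := by
    intro v hv
    have := hsubC hv
    simp only [Finset.mem_insert, Finset.mem_singleton] at this
    rcases this with rfl | rfl
    · simp [pairSub]
    · simp [pairSub, Ne.symm hne]
  have heq : p.subst (pairSub (x, ρ x) (x', ρ x')) = p.ground ρ :=
    subst_eq_ground _ ρ (pairSub_agrees ρ x x') hdom
  obtain ⟨q, hq, hmq⟩ := hold.2.2.2.1 p hp
  rw [heq] at hmq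
  have : p.ground ρ = q :=
    ground_matches_eq (ground_isGround ρ p) (hground q (hsub hq)) hmq
  exact hpold (this ▸ hq)
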